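/- The labeling λ_• of the pointed partition poset Π_n^• satisfies the rank two switching property: for every interval [x,y] of Π_n^• with ρ(y) − ρ(x) = 2, if the unique increasing maximal chain of [x,y] has label word ab, then there exists a unique maximal chain of [x,y] with label word ba. -/

import Mathlib

open Finset

open scoped BigOperators Classical

/-! ## Generic machinery for edge labelings of posets presented by cover relations -/

section Chains

variable {α : Type*} {L : Type*}

/-- The word of labels read along a list of poset elements. -/
def wordOf (lab : α → α → L) : List α → List L
  | x :: y :: rest => lab x y :: wordOf lab (y :: rest)
  | _ => []

/-- `c` is a saturated chain from `x` to `y` with respect to the cover relation `cov`;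
in a graded poset these are exactly the maximal chains of the interval `[x, y]`. -/
def IsSatChain (cov : α → α → Prop) (x y : α) (c : List α) : Prop :=
  c.Chain' cov ∧ c.head? = some x ∧ c.getLast? = some y

/-- A word of labels is increasing if consecutive labels strictly increase. -/
def IncWord (lt : L → L → Prop) (w : List L) : Prop := w.Chain' lt

/-- A word of labels is ascent-free if no consecutive pair of labels strictly increases. -/
def AscFree (lt : L → L → Prop) (w : List L) : Prop := w.Chain' fun a b => ¬ lt a b

/-- The partial order generated by a cover relation. -/
def leOf (cov : α → α → Prop) : α → α → Prop := Relation.ReflTransGen cov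

/-- The strict order generated by a cover relation. -/
def ltOf (cov : α → α → Prop) (a b : α) : Prop := leOf cov a b ∧ a ≠ b

/-- An ER-labeling: every closed interval has a unique increasing maximal chain. -/
def IsERLabeling (cov : α → α → Prop) (lab : α → α → L) (lt : L → L → Prop) : Prop :=
  ∀ x y, leOf cov x y → ∃! c, IsSatChain cov x y c ∧ IncWord lt (wordOf lab c)

/-- The rank two switching property: in every rank-two interval whose increasing chain
has word of labels `ab`, there is a unique chain with word of labels `ba`. -/
def RankTwoSwitch (cov : α → α → Prop) (lab : α → α → L) (lt : L → L → Prop) : Prop :=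
  ∀ x y c a b, IsSatChain cov x y c → IncWord lt (wordOf lab c) → wordOf lab c = [a, b] →
    ∃! c', IsSatChain cov x y c' ∧ wordOf lab c' = [b, a]

/-- In every interval, distinct ascent-free maximal chains have distinct label words. -/
def AscFreeInj (cov : α → α → Prop) (lab : α → α → L) (lt : L → L → Prop) : Prop :=
  ∀ x y c c', IsSatChain cov x y c → IsSatChain cov x y c' →
    AscFree lt (wordOf lab c) → AscFree lt (wordOf lab c') →
    wordOf lab c = wordOf lab c' → c = c'

/-- An EW-labeling. -/
def IsEWLabeling (cov : α → α → Prop) (lab : α → α → L) (lt : L → L → Prop) : Prop :=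
  IsERLabeling cov lab lt ∧ RankTwoSwitch cov lab lt ∧ AscFreeInj cov lab lt

/-- An EL-labeling: every closed interval has a unique increasing maximal chain,
which lexicographically precedes every other maximal chain of the interval. -/
def IsELLabeling (cov : α → α → Prop) (lab : α → α → L) (lt : L → L → Prop) : Prop :=
  ∀ x y, leOf cov x y →
    ∃ c, (IsSatChain cov x y c ∧ IncWord lt (wordOf lab c)) ∧
      ∀ c', IsSatChain cov x y c' → c' ≠ c →
        ¬ IncWord lt (wordOf lab c') ∧ List.Lex lt (wordOf lab c) (wordOf lab c')

end Chains

/-! ## Möbius functions and Whitney numbers -/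

section Whitney

variable {α : Type*} {β : Type*}

/-- Auxiliary Möbius function computed with fuel; for an element of rank `k` of a
graded poset, fuel `k` computes the one-variable Möbius function `μ(0̂, ·)`. -/
noncomputable def muAux (ltr : α → α → Prop) (bot : α) : ℕ → α → ℤ
  | 0, x => if x = bot then 1 else 0
  | k + 1, x => if x = bot then 1 else - ∑ᶠ (y : α) (_ : ltr y x), muAux ltr bot k y

/-- The one-variable Möbius function `μ(0̂, x)` of a graded poset presented by its
cover relation `cov`, minimum `bot` and rank function `rk`. -/
noncomputable def muBot (cov : α → α → Prop) (bot : α) (rk : α → ℕ) (x : α) : ℤ :=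
  muAux (ltOf cov) bot (rk x) x

/-- The `k`-th Whitney number of the first kind. -/
noncomputable def whitney1 (cov : α → α → Prop) (bot : α) (rk : α → ℕ) (k : ℕ) : ℤ :=
  ∑ᶠ (x : α) (_ : rk x = k), muBot cov bot rk x

/-- The `k`-th Whitney number of the second kind. -/
noncomputable def whitney2 (rk : α → ℕ) (k : ℕ) : ℕ :=
  Nat.card {x : α // rk x = k}

/-- Two graded posets are Whitney duals if their Whitney numbers of the first and second
kind are swapped (up to sign). -/
def IsWhitneyDual (covP : α → α → Prop) (botP : α) (rkP : α → ℕ)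
    (covQ : β → β → Prop) (botQ : β) (rkQ : β → ℕ) : Prop :=
  ∀ k, (whitney1 covP botP rkP k).natAbs = whitney2 rkQ k ∧
       (whitney1 covQ botQ rkQ k).natAbs = whitney2 rkP k

/-- Two graded posets are Whitney twins if they have the same Whitney numbers of the first
and of the second kind. -/
def IsWhitneyTwin (covP : α → α → Prop) (botP : α) (rkP : α → ℕ)
    (covQ : β → β → Prop) (botQ : β) (rkQ : β → ℕ) : Prop :=
  ∀ k, whitney1 covP botP rkP k = whitney1 covQ botQ rkQ k ∧ whitney2 rkP k = whitney2 rkQ k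

/-- `(cov, bot, rk)` presents a graded poset with minimum `bot`. -/
def IsGradedPoset (cov : α → α → Prop) (bot : α) (rk : α → ℕ) : Prop :=
  (∀ x, leOf cov bot x) ∧ rk bot = 0 ∧ ∀ x y, cov x y → rk y = rk x + 1

/-- A graded poset has a Whitney dual. -/
def HasWhitneyDual {γ : Type} (cov : γ → γ → Prop) (bot : γ) (rk : γ → ℕ) : Prop :=
  ∃ (β : Type) (_ : Finite β) (covQ : β → β → Prop) (botQ : β) (rkQ : β → ℕ),
    IsGradedPoset covQ botQ rkQ ∧ IsWhitneyDual cov bot rk covQ botQ rkQ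

/-- Isomorphism of the posets generated by two cover relations. -/
def CovPosetIso (covP : α → α → Prop) (covQ : β → β → Prop) : Prop :=
  ∃ e : α ≃ β, ∀ x y, leOf covP x y ↔ leOf covQ (e x) (e y)

end Whitney

/-! ## The label posets `Λₙʷ` and `Λₙ•` (strict order relations)

Labels are triples `(a, b, u)` with `a < b` in `[n]` and `u ∈ {0,1}` (encoded as `Bool`). -/

/-- The strict order of `Λₙʷ = Γ₁ ⊕ ⋯ ⊕ Γ_{n-1}` where `Γ_a` carries the product order
`(a,b)ᵘ ≤ (a,c)ᵛ ↔ b ≤ c ∧ u ≤ v`. -/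
def ltLw (x y : ℕ × ℕ × Bool) : Prop :=
  x.1 < y.1 ∨ (x.1 = y.1 ∧ x.2.1 ≤ y.2.1 ∧ x.2.2 ≤ y.2.2 ∧ x.2 ≠ y.2)

/-- The strict order of `Λₙ• = A₁ ⊕ C₁ ⊕ ⋯ ⊕ A_{n-1} ⊕ C_{n-1}` where `A_a` is the
antichain of the `(a,b)⁰` and `C_a` is the chain of the `(a,b)¹` ordered by `b`. -/
def ltLp (x y : ℕ × ℕ × Bool) : Prop :=
  x.1 < y.1 ∨ (x.1 = y.1 ∧
    ((x.2.2 = false ∧ y.2.2 = true) ∨ (x.2.2 = true ∧ y.2.2 = true ∧ x.2.1 < y.2.1)))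

/-! ## Pointed and weighted partition posets -/

/-- The minimum of a finite set of naturals (`0` for the empty set). -/
def minB (B : Finset ℕ) : ℕ := B.min.untopD 0

/-- Pointed partitions of the ground set `A`: partitions of `A` into blocks, each block
carrying a distinguished (pointed) element.  A pointed block is a pair `(B, p)` with `p ∈ B`. -/
abbrev PPart (A : Finset ℕ) : Type :=
  {π : Finset (Finset ℕ × ℕ) //
    (∀ b ∈ π, b.2 ∈ b.1) ∧
    (∀ b ∈ π, ∀ b' ∈ π, b ≠ b' → Disjoint b.1 b'.1) ∧
    π.biUnion Prod.fst = A}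

/-- The cover relation of the pointed partition poset: merge two pointed blocks, the merged
block being pointed at the pointed element of one of the two. -/
def covPP {A : Finset ℕ} (π π' : PPart A) : Prop :=
  ∃ b1 ∈ π.1, ∃ b2 ∈ π.1, minB b1.1 < minB b2.1 ∧
    ∃ p : ℕ, (p = b1.2 ∨ p = b2.2) ∧
      π'.1 = insert (b1.1 ∪ b2.1, p) ((π.1.erase b1).erase b2)

/-- The labeling `λ•` (as a bare label map): the cover `u`-merging blocks `A, B` with
`min A < min B` gets the label `(min A, min B, u)`, where `u = 1` exactly when the merged
block is pointed at the pointed element of `A`. -/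
noncomputable def labPP {A : Finset ℕ} (π π' : PPart A) : ℕ × ℕ × Bool :=
  let olds := π.1 \ π'.1
  let mins := olds.image (fun b => minB b.1)
  (mins.min.untopD 0, mins.max.unbotD 0,
    if ∃ b ∈ olds, minB b.1 = mins.min.untopD 0 ∧ ∃ d ∈ π'.1 \ π.1, d.2 = b.2
      then true else false)

/-- The minimum of the pointed partition poset: all blocks are pointed singletons. -/
def botPP (A : Finset ℕ) : PPart A :=
  ⟨A.image fun i => ({i}, i), by
    refine ⟨?_, ?_, ?_⟩
    · intro b hb
      obtain ⟨i, -, rfl⟩ := Finset.mem_image.1 hb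
      exact Finset.mem_singleton_self i
    · intro b hb b' hb' hne
      obtain ⟨i, -, rfl⟩ := Finset.mem_image.1 hb
      obtain ⟨j, -, rfl⟩ := Finset.mem_image.1 hb'
      have hij : i ≠ j := fun h => hne (by rw [h])
      simp [Finset.disjoint_left, hij]
    · ext x
      simp⟩

/-- The rank function of the pointed partition poset. -/
def rkPP {A : Finset ℕ} (π : PPart A) : ℕ := A.card - π.1.card

/-- Weighted partitions of the ground set `A`: partitions of `A` into blocks, each block `B`
carrying a weight `v` with `0 ≤ v ≤ |B| - 1`. -/
abbrev WPart (A : Finset ℕ) : Type :=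
  {π : Finset (Finset ℕ × ℕ) //
    (∀ b ∈ π, b.2 < b.1.card) ∧
    (∀ b ∈ π, ∀ b' ∈ π, b ≠ b' → Disjoint b.1 b'.1) ∧
    π.biUnion Prod.fst = A}

/-- The cover relation of the weighted partition poset: merge blocks `A^v, B^w` into
`(A ∪ B)^(v+w+u)` for some `u ∈ {0,1}`. -/
def covWP {A : Finset ℕ} (π π' : WPart A) : Prop :=
  ∃ b1 ∈ π.1, ∃ b2 ∈ π.1, minB b1.1 < minB b2.1 ∧ ∃ u : Bool,
    π'.1 = insert (b1.1 ∪ b2.1, b1.2 + b2.2 + (if u then 1 else 0)) ((π.1.erase b1).erase b2)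

/-- The labeling `λ_w` (as a bare label map): the cover merging `A^v, B^w` with
`min A < min B` into `(A ∪ B)^(v+w+u)` gets the label `(min A, min B, u)`. -/
noncomputable def labWP {A : Finset ℕ} (π π' : WPart A) : ℕ × ℕ × Bool :=
  let olds := π.1 \ π'.1
  let mins := olds.image (fun b => minB b.1)
  (mins.min.untopD 0, mins.max.unbotD 0,
    if (π'.1 \ π.1).sum Prod.snd = olds.sum Prod.snd + 1 then true else false)

/-- The minimum of the weighted partition poset: all blocks singletons of weight `0`. -/
def botWP (A : Finset ℕ) : WPart A :=
  ⟨A.image fun i => ({i}, 0), by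
    refine ⟨?_, ?_, ?_⟩
    · intro b hb
      obtain ⟨i, -, rfl⟩ := Finset.mem_image.1 hb
      simp
    · intro b hb b' hb' hne
      obtain ⟨i, -, rfl⟩ := Finset.mem_image.1 hb
      obtain ⟨j, -, rfl⟩ := Finset.mem_image.1 hb'
      have hij : i ≠ j := fun h => hne (by rw [h])
      simp [Finset.disjoint_left, hij]
    · ext x
      simp⟩

/-- The rank function of the weighted partition poset. -/
def rkWP {A : Finset ℕ} (π : WPart A) : ℕ := A.card - π.1.card
/-! ## Bicolored binary trees and Lyndon forests -/

/-- Planar binary trees with `ℕ`-labeled leaves and `Bool`-colored internal vertices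
(`false` = color 0, `true` = color 1). -/
inductive BT : Type
  | leaf : ℕ → BT
  | node : Bool → BT → BT → BT
deriving DecidableEq

namespace BT

/-- The valency: the minimum leaf label of a tree. -/
def nu : BT → ℕ
  | leaf a => a
  | node _ l r => min l.nu r.nu

/-- The set of leaf labels of a tree. -/
def leaves : BT → Finset ℕ
  | leaf a => {a}
  | node _ l r => l.leaves ∪ r.leaves

/-- The number of internal vertices of a tree. -/
def internals : BT → ℕ
  | leaf _ => 0
  | node _ l r => l.internals + r.internals + 1

/-- A tree is normalized if its leaf labels are distinct and every internal vertex has the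
same valency as its left child. -/
def normalized : BT → Prop
  | leaf _ => True
  | node _ l r => l.normalized ∧ r.normalized ∧ Disjoint l.leaves r.leaves ∧ l.nu < r.nu

/-- The pointed Lyndon condition: at every internal vertex `v` with internal left child,
`color (L v) ≥ color v`, and if `color (L v) = color v = 1` then `v` is a Lyndon vertex,
i.e. `ν (R (L v)) > ν (R v)`. -/
def pLyn : BT → Prop
  | leaf _ => True
  | node c l r => l.pLyn ∧ r.pLyn ∧
      (match l with
       | leaf _ => True
       | node c' _ r' => c ≤ c' ∧ ((c' = c ∧ c = true) → r.nu < r'.nu))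

/-- The bicolored Lyndon condition: every internal vertex with internal left child is
Lyndon (`ν (R (L v)) > ν (R v)`) or satisfies `color (L v) > color v`. -/
def wLyn : BT → Prop
  | leaf _ => True
  | node c l r => l.wLyn ∧ r.wLyn ∧
      (match l with
       | leaf _ => True
       | node c' _ r' => r.nu < r'.nu ∨ c < c')

/-- The pointed element of a bicolored tree: a `1`-colored vertex keeps the point of its
left subtree and a `0`-colored vertex keeps the point of its right subtree. -/
def ppt : BT → ℕ
  | leaf a => a
  | node c l r => if c then l.ppt else r.ppt

end BT

/-- `u`-merging of two pointed Lyndon trees: create a new root of color `u` with the two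
trees as subtrees, then repeatedly slide the new vertex together with its right subtree
past its left child until the pointed Lyndon condition holds at the new vertex. -/
def mergeP (u : Bool) : BT → BT → BT
  | BT.leaf a, t2 => BT.node u (BT.leaf a) t2
  | BT.node c a b, t2 =>
      if u ≤ c ∧ ((c = true ∧ u = true) → t2.nu < b.nu)
      then BT.node u (BT.node c a b) t2
      else BT.node c (mergeP u a t2) b

/-- `u`-merging of two bicolored Lyndon trees: create a new root of color `u` with the two
trees as subtrees, then repeatedly slide the new vertex together with its right subtree
past its left child until the bicolored Lyndon condition holds at the new vertex. -/
def mergeW (u : Bool) : BT → BT → BT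
  | BT.leaf a, t2 => BT.node u (BT.leaf a) t2
  | BT.node c a b, t2 =>
      if t2.nu < b.nu ∨ u < c
      then BT.node u (BT.node c a b) t2
      else BT.node c (mergeW u a t2) b

/-- A valid forest on the ground set `[n]`, each tree normalized and satisfying `P`, the
trees having pairwise disjoint leaf sets which together cover `[n] = {1, …, n}`. -/
def ForestValid (n : ℕ) (P : BT → Prop) (F : Finset BT) : Prop :=
  (∀ t ∈ F, t.normalized ∧ P t) ∧
  (∀ t ∈ F, ∀ t' ∈ F, t ≠ t' → Disjoint t.leaves t'.leaves) ∧
  F.biUnion BT.leaves = Finset.Icc 1 n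

/-- The set of pointed Lyndon forests on `[n]`. -/
abbrev FLynP (n : ℕ) : Type := {F : Finset BT // ForestValid n BT.pLyn F}

/-- The set of bicolored Lyndon forests on `[n]`. -/
abbrev FLynW (n : ℕ) : Type := {F : Finset BT // ForestValid n BT.wLyn F}

/-- The cover relation on forests: `u`-merge two of the trees (the one with smaller minimum
leaf label going to the left). -/
def covForest (merge : Bool → BT → BT → BT) (F F' : Finset BT) : Prop :=
  ∃ t1 ∈ F, ∃ t2 ∈ F, t1.nu < t2.nu ∧ ∃ u : Bool,
    F' = insert (merge u t1 t2) ((F.erase t1).erase t2)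

/-- The cover relation of the poset of pointed Lyndon forests `FLyn_n^•`. -/
def covFP {n : ℕ} (F F' : FLynP n) : Prop := covForest mergeP F.1 F'.1

/-- The cover relation of the poset of bicolored Lyndon forests `FLyn_n^w`. -/
def covFW {n : ℕ} (F F' : FLynW n) : Prop := covForest mergeW F.1 F'.1

/-- The forest of `n` isolated leaves. -/
def botForest (n : ℕ) : Finset BT := (Finset.Icc 1 n).image BT.leaf

theorem botForest_valid (n : ℕ) (P : BT → Prop) (hP : ∀ a, P (BT.leaf a)) :
    ForestValid n P (botForest n) := by
  refine ⟨?_, ?_, ?_⟩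
  · intro t ht
    obtain ⟨i, -, rfl⟩ := Finset.mem_image.1 ht
    exact ⟨trivial, hP i⟩
  · intro t ht t' ht' hne
    obtain ⟨i, -, rfl⟩ := Finset.mem_image.1 ht
    obtain ⟨j, -, rfl⟩ := Finset.mem_image.1 ht'
    have hij : i ≠ j := fun h => hne (by rw [h])
    simp only [BT.leaves]
    simp [Finset.disjoint_left, hij]
  · ext x
    simp [botForest, BT.leaves]

/-- The minimum of the poset of pointed Lyndon forests. -/
def botFP (n : ℕ) : FLynP n := ⟨botForest n, botForest_valid n _ fun _ => trivial⟩

/-- The minimum of the poset of bicolored Lyndon forests. -/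
def botFW (n : ℕ) : FLynW n := ⟨botForest n, botForest_valid n _ fun _ => trivial⟩

/-- The rank of a forest: its total number of internal vertices. -/
def rkForest (F : Finset BT) : ℕ := F.sum BT.internals

/-- The rank function of `FLyn_n^•`. -/
def rkFP {n : ℕ} (F : FLynP n) : ℕ := rkForest F.1

/-- The rank function of `FLyn_n^w`. -/
def rkFW {n : ℕ} (F : FLynW n) : ℕ := rkForest F.1

/-! ## The Whitney dual construction `R_λ(P)` -/

section RPoset

variable {α : Type*} {L : Type*}

/-- Swap the leftmost ascent of a word of labels. -/
noncomputable def swapFirstAscent (lt : L → L → Prop) : List L → List L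
  | a :: b :: rest => if lt a b then b :: a :: rest else a :: swapFirstAscent lt (b :: rest)
  | w => w

/-- Sort a word of labels by repeatedly swapping its leftmost ascent until it is
ascent-free. -/
noncomputable def sortWord (lt : L → L → Prop) (w : List L) : List L :=
  (swapFirstAscent lt)^[w.length * w.length] w

/-- The underlying set of the Whitney dual `R_λ(P)`: pairs `(x, w)` where `w` is the label
word of an ascent-free saturated chain from `0̂` to `x`. -/
abbrev RPoset (cov : α → α → Prop) (lab : α → α → L) (lt : L → L → Prop) (bot : α) : Type _ :=
  {q : α × List L //
    ∃ c, IsSatChain cov bot q.1 c ∧ AscFree lt (wordOf lab c) ∧ wordOf lab c = q.2}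

/-- The cover relation of `R_λ(P)`: `(x, w) ⋖ (y, u)` iff `x ⋖ y` and `u` is obtained by
sorting the label of `x ⋖ y` into `w`. -/
def covR (cov : α → α → Prop) (lab : α → α → L) (lt : L → L → Prop) (bot : α)
    (p q : RPoset cov lab lt bot) : Prop :=
  cov p.1.1 q.1.1 ∧ q.1.2 = sortWord lt (p.1.2 ++ [lab p.1.1 q.1.1])

end RPoset

/-! ## Reiner's poset of rooted spanning forests -/

/-- A rooted spanning forest on `[n]`, encoded by its parent function: `f i` is the parent
of the vertex `i` (`f i = i` for roots), vertices outside `[n]` being fixed, and every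
vertex reaching a root after finitely many steps (acyclicity). -/
def SFvalid (n : ℕ) (f : ℕ → ℕ) : Prop :=
  (∀ i ∈ Finset.Icc 1 n, f i ∈ Finset.Icc 1 n) ∧
  (∀ i, i ∉ Finset.Icc 1 n → f i = i) ∧
  (∀ i, ∃ k, f^[k + 1] i = f^[k] i)

/-- Reiner's poset `SF_n` of rooted spanning forests of the complete graph on `[n]`. -/
abbrev SF (n : ℕ) : Type := {f : ℕ → ℕ // SFvalid n f}

/-- The cover relation of `SF_n`: add an edge between the roots of two trees, one of the
two roots becoming the root of the merged tree. -/
def covSF {n : ℕ} (f g : SF n) : Prop :=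
  ∃ r1 ∈ Finset.Icc 1 n, ∃ r2 ∈ Finset.Icc 1 n, r1 ≠ r2 ∧
    f.1 r1 = r1 ∧ f.1 r2 = r2 ∧
    (g.1 = Function.update f.1 r1 r2 ∨ g.1 = Function.update f.1 r2 r1)

/-- The rank of a rooted spanning forest: its number of edges. -/
def rkSF {n : ℕ} (f : SF n) : ℕ := ((Finset.Icc 1 n).filter fun i => f.1 i ≠ i).card
/-! ## Further constructions used in particular statements -/

/-- The map `Φ` on underlying finsets: a pointed block `(B, q)` of a pointed partition
above `α` is sent to the set of minima of the `α`-blocks contained in `B`, pointed at the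
minimum of the `α`-block containing `q`. -/
noncomputable def PhiMap (af : Finset (Finset ℕ × ℕ)) (pf : Finset (Finset ℕ × ℕ)) :
    Finset (Finset ℕ × ℕ) :=
  pf.image fun b =>
    ((af.filter fun c => c.1 ⊆ b.1).image fun c => minB c.1,
     ((af.filter fun c => b.2 ∈ c.1).image fun c => minB c.1).min.untopD 0)

/-- The expected word of labels of the unique increasing maximal chain of the interval
`[0̂, [n]^p]` of the pointed partition poset:
`(1,2)¹ ⋯ (1,n)¹` if `p = 1`, and `(1,p)⁰ (1,2)¹ ⋯ (1,p-1)¹ (1,p+1)¹ ⋯ (1,n)¹` otherwise. -/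
def expectedWordP (n p : ℕ) : List (ℕ × ℕ × Bool) :=
  let base := (List.range (n - 1)).map fun i => ((1 : ℕ), i + 2, true)
  if p = 1 then base else ((1 : ℕ), p, false) :: base.erase (1, p, true)

/-- Merge two words of labels, each with non-increasing first components, into a single
word with non-increasing first components. -/
def mergeByNu : List (ℕ × ℕ × Bool) → List (ℕ × ℕ × Bool) → List (ℕ × ℕ × Bool)
  | [], ys => ys
  | xs, [] => xs
  | x :: xs, y :: ys =>
      if y.1 ≤ x.1 then x :: mergeByNu xs (y :: ys) else y :: mergeByNu (x :: xs) ys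
termination_by xs ys => xs.length + ys.length

/-- The word of labels of a tree read along the reverse-minimal linear extension of its
internal vertices: the internal vertex `v` contributes `(ν (L v), ν (R v), color v)`, the
vertices being listed with non-increasing valencies (descendants first among equal
valencies). -/
def BT.rmword : BT → List (ℕ × ℕ × Bool)
  | BT.leaf _ => []
  | BT.node c l r => mergeByNu l.rmword r.rmword ++ [(l.nu, r.nu, c)]

/-- The word of labels of the saturated chain `c(F)` associated to a forest `F`, read along
the reverse-minimal linear extension of the internal vertices of `F`. -/
noncomputable def forestWord (F : Finset BT) : List (ℕ × ℕ × Bool) :=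
  (F.toList.map BT.rmword).foldr mergeByNu []

/-- `TLyn_{n,p}^•`: pointed Lyndon trees on `[n]` whose associated chain ends at `[n]^p`,
i.e. whose tracked pointed element is `p`. -/
abbrev TLynBullet (n p : ℕ) : Type :=
  {T : BT // T.normalized ∧ T.pLyn ∧ T.leaves = Finset.Icc 1 n ∧ T.ppt = p}

/-- The labeling `λ̃` of `Πₙ•` proposed by Bellier-Millès, Delcroix-Oger and Hoffbeck:
the cover `u`-merging blocks with minima `a < b` in a pointed partition `π` with `|π|`
blocks is labeled `(b, a + n - |π|)` if `u = 0` and `(b, b + n - |π|)` if `u = 1`. -/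
noncomputable def labT (n : ℕ) {A : Finset ℕ} (π π' : PPart A) : ℕ × ℕ :=
  let olds := π.1 \ π'.1
  let mins := olds.image fun b => minB b.1
  let a := mins.min.untopD 0
  let b := mins.max.unbotD 0
  if ∃ c ∈ olds, minB c.1 = a ∧ ∃ d ∈ π'.1 \ π.1, d.2 = c.2
  then (b, b + n - π.1.card)
  else (b, a + n - π.1.card)

/-- The (strict) lexicographic order on `ℕ × ℕ`. -/
def ltT (x y : ℕ × ℕ) : Prop := x.1 < y.1 ∨ (x.1 = y.1 ∧ x.2 < y.2)


/-! ### Auxiliary lemmas for Statement 4 -/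

section Stmt4Aux

lemma minB_mem {s : Finset ℕ} (h : s.Nonempty) : minB s ∈ s := by
  obtain ⟨m, hm⟩ := Finset.min_of_nonempty h
  rw [minB, hm, WithTop.untopD_coe]
  exact Finset.mem_of_min hm

lemma minB_le {s : Finset ℕ} {a : ℕ} (ha : a ∈ s) : minB s ≤ a := by
  obtain ⟨m, hm⟩ := Finset.min_of_nonempty ⟨a, ha⟩
  rw [minB, hm, WithTop.untopD_coe]
  exact Finset.min_le_of_eq ha hm

lemma minB_union {s t : Finset ℕ} (hs : s.Nonempty) (ht : t.Nonempty) :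
    minB (s ∪ t) = min (minB s) (minB t) := by
  apply le_antisymm
  · exact le_min (minB_le (Finset.mem_union_left _ (minB_mem hs)))
      (minB_le (Finset.mem_union_right _ (minB_mem ht)))
  · have hmem : minB (s ∪ t) ∈ s ∪ t :=
      minB_mem ⟨minB s, Finset.mem_union_left _ (minB_mem hs)⟩
    rcases Finset.mem_union.1 hmem with h | h
    · exact le_trans (min_le_left _ _) (minB_le h)
    · exact le_trans (min_le_right _ _) (minB_le h)

variable {A : Finset ℕ}

lemma blk_nonempty (π : PPart A) {b : Finset ℕ × ℕ} (hb : b ∈ π.1) : b.1.Nonempty :=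
  ⟨b.2, π.2.1 b hb⟩

lemma eq_of_minB (π : PPart A) {b b' : Finset ℕ × ℕ} (hb : b ∈ π.1)
    (hb' : b' ∈ π.1) (h : minB b.1 = minB b'.1) : b = b' := by
  by_contra hne
  have hd := π.2.2.1 b hb b' hb' hne
  have h1 : minB b.1 ∈ b'.1 := by rw [h]; exact minB_mem (blk_nonempty π hb')
  exact Finset.disjoint_left.1 hd (minB_mem (blk_nonempty π hb)) h1

lemma union_not_mem (π : PPart A) {b1 b2 : Finset ℕ × ℕ}
    (hb1 : b1 ∈ π.1) (hb2 : b2 ∈ π.1) (hne : b1 ≠ b2) (p : ℕ) :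
    (b1.1 ∪ b2.1, p) ∉ π.1 := by
  intro hmem
  have hd12 : Disjoint b1.1 b2.1 := π.2.2.1 b1 hb1 b2 hb2 hne
  have hcne : ((b1.1 ∪ b2.1, p) : Finset ℕ × ℕ) ≠ b1 := by
    intro h
    have h1 : b2.2 ∈ b1.1 := by
      have h2 := congrArg Prod.fst h
      simp only at h2
      rw [← h2]
      exact Finset.mem_union_right _ (π.2.1 b2 hb2)
    exact Finset.disjoint_left.1 hd12 h1 (π.2.1 b2 hb2)
  have hdc : Disjoint (b1.1 ∪ b2.1) b1.1 := π.2.2.1 _ hmem b1 hb1 hcne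
  exact Finset.disjoint_left.1 hdc (Finset.mem_union_left _ (π.2.1 b1 hb1)) (π.2.1 b1 hb1)

/-- Merging two pointed blocks of a pointed partition. -/
def pmerge (π : PPart A) (b1 b2 : Finset ℕ × ℕ) (p : ℕ) (hb1 : b1 ∈ π.1) (hb2 : b2 ∈ π.1)
    (hne : b1 ≠ b2) (hp : p = b1.2 ∨ p = b2.2) : PPart A := by
  refine ⟨insert (b1.1 ∪ b2.1, p) ((π.1.erase b1).erase b2), ?_, ?_, ?_⟩
  · intro c hc
    rcases Finset.mem_insert.1 hc with rfl | hc
    · rcases hp with h | h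
      · exact Finset.mem_union_left _ (h ▸ π.2.1 b1 hb1)
      · exact Finset.mem_union_right _ (h ▸ π.2.1 b2 hb2)
    · exact π.2.1 c (Finset.mem_of_mem_erase (Finset.mem_of_mem_erase hc))
  · have hdisj : ∀ c ∈ (π.1.erase b1).erase b2, Disjoint (b1.1 ∪ b2.1) c.1 := by
      intro c hc
      have hc2 := Finset.mem_erase.1 hc
      have hc1 := Finset.mem_erase.1 hc2.2
      exact Finset.disjoint_union_left.2
        ⟨π.2.2.1 b1 hb1 c hc1.2 (fun h => hc1.1 h.symm),
         π.2.2.1 b2 hb2 c hc1.2 (fun h => hc2.1 h.symm)⟩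
    intro c hc c' hc' hcc
    rcases Finset.mem_insert.1 hc with rfl | hc
    · rcases Finset.mem_insert.1 hc' with rfl | hc'
      · exact absurd rfl hcc
      · exact hdisj c' hc'
    · rcases Finset.mem_insert.1 hc' with rfl | hc'
      · exact (hdisj c hc).symm
      · exact π.2.2.1 c (Finset.mem_of_mem_erase (Finset.mem_of_mem_erase hc)) c'
          (Finset.mem_of_mem_erase (Finset.mem_of_mem_erase hc')) hcc
  · have hb2' : b2 ∈ π.1.erase b1 := Finset.mem_erase.2 ⟨fun h => hne h.symm, hb2⟩
    have hx : insert b1 (insert b2 ((π.1.erase b1).erase b2)) = π.1 := by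
      rw [Finset.insert_erase hb2', Finset.insert_erase hb1]
    have hA := π.2.2.2
    rw [← hx, Finset.biUnion_insert, Finset.biUnion_insert] at hA
    rw [Finset.biUnion_insert]
    show b1.1 ∪ b2.1 ∪ (((π.1.erase b1).erase b2).biUnion Prod.fst) = A
    rw [Finset.union_assoc]
    exact hA

lemma labPP_eq {π π' : PPart A} {b1 b2 : Finset ℕ × ℕ} {p : ℕ}
    (hb1 : b1 ∈ π.1) (hb2 : b2 ∈ π.1) (hlt : minB b1.1 < minB b2.1)
    (hp : p = b1.2 ∨ p = b2.2)
    (heq : π'.1 = insert (b1.1 ∪ b2.1, p) ((π.1.erase b1).erase b2)) :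
    labPP π π' = (minB b1.1, minB b2.1, if p = b1.2 then true else false) := by
  have hne : b1 ≠ b2 := fun h => absurd hlt (by simp [h])
  have hnew : ((b1.1 ∪ b2.1, p) : Finset ℕ × ℕ) ∉ π.1 := union_not_mem π hb1 hb2 hne p
  have h1n : b1 ≠ ((b1.1 ∪ b2.1, p) : Finset ℕ × ℕ) := fun h => hnew (h ▸ hb1)
  have h2n : b2 ≠ ((b1.1 ∪ b2.1, p) : Finset ℕ × ℕ) := fun h => hnew (h ▸ hb2)
  have holds : π.1 \ π'.1 = {b1, b2} := by
    ext c
    simp only [heq, Finset.mem_sdiff, Finset.mem_insert, Finset.mem_erase,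
      Finset.mem_singleton]
    constructor
    · rintro ⟨hc, hc2⟩
      by_contra hcc
      push_neg at hcc
      exact hc2 (Or.inr ⟨hcc.2, hcc.1, hc⟩)
    · rintro (rfl | rfl)
      · refine ⟨hb1, fun h => ?_⟩
        rcases h with h | ⟨_, h, _⟩
        · exact h1n h
        · exact h rfl
      · refine ⟨hb2, fun h => ?_⟩
        rcases h with h | ⟨h, _, _⟩
        · exact h2n h
        · exact h rfl
  have hnews : π'.1 \ π.1 = {((b1.1 ∪ b2.1, p) : Finset ℕ × ℕ)} := by
    ext c
    simp only [heq, Finset.mem_sdiff, Finset.mem_insert, Finset.mem_erase,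
      Finset.mem_singleton]
    constructor
    · rintro ⟨h | ⟨_, _, h⟩, hc⟩
      · exact h
      · exact absurd h hc
    · rintro rfl
      exact ⟨Or.inl rfl, hnew⟩
  have hmin2 : (({minB b1.1, minB b2.1} : Finset ℕ).min).untopD 0 = minB b1.1 := by
    rw [Finset.min_insert, Finset.min_singleton, ← WithTop.coe_min, WithTop.untopD_coe,
      min_eq_left hlt.le]
  have hmax2 : (({minB b1.1, minB b2.1} : Finset ℕ).max).unbotD 0 = minB b2.1 := by
    rw [Finset.max_insert, Finset.max_singleton, ← WithBot.coe_max, WithBot.unbotD_coe,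
      max_eq_right hlt.le]
  have hcond : (∃ c ∈ ({b1, b2} : Finset (Finset ℕ × ℕ)), minB c.1 = minB b1.1 ∧
      ∃ d ∈ ({((b1.1 ∪ b2.1, p) : Finset ℕ × ℕ)} : Finset (Finset ℕ × ℕ)), d.2 = c.2) ↔
      p = b1.2 := by
    constructor
    · rintro ⟨c, hc, hm, d, hd, hdc⟩
      rw [Finset.mem_singleton] at hd
      subst hd
      rcases Finset.mem_insert.1 hc with rfl | hc
      · exact hdc
      · rw [Finset.mem_singleton] at hc
        subst hc
        exact absurd hm (by omega)
    · intro h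
      exact ⟨b1, Finset.mem_insert_self _ _, rfl,
        (b1.1 ∪ b2.1, p), Finset.mem_singleton_self _, h⟩
  simp only [labPP, holds, hnews, Finset.image_insert, Finset.image_singleton, hmin2, hmax2,
    hcond]

lemma cover_unique {π σ σ' : PPart A} (h : covPP π σ) (h' : covPP π σ')
    (hl : labPP π σ = labPP π σ') : σ = σ' := by
  obtain ⟨b1, hb1, b2, hb2, hlt, p, hp, heq⟩ := h
  obtain ⟨c1, hc1, c2, hc2, hlt', q, hq, heq'⟩ := h'
  rw [labPP_eq hb1 hb2 hlt hp heq, labPP_eq hc1 hc2 hlt' hq heq'] at hl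
  obtain ⟨h1, h2, h3⟩ : minB b1.1 = minB c1.1 ∧ minB b2.1 = minB c2.1 ∧
      (if p = b1.2 then true else false) = (if q = c1.2 then true else false) := by
    simpa [Prod.ext_iff] using hl
  obtain rfl : b1 = c1 := eq_of_minB π hb1 hc1 h1
  obtain rfl : b2 = c2 := eq_of_minB π hb2 hc2 h2
  have hpq : p = q := by
    by_cases h4 : p = b1.2
    · by_cases h5 : q = b1.2
      · rw [h4, h5]
      · rw [if_pos h4, if_neg h5] at h3
        simp at h3
    · by_cases h5 : q = b1.2
      · rw [if_neg h4, if_pos h5] at h3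
        simp at h3
      · rcases hp with h | h
        · exact absurd h h4
        · rcases hq with h' | h'
          · exact absurd h' h5
          · rw [h, h']
  exact Subtype.ext (by rw [heq, heq', hpq])

lemma chain_two {α : Type*} {L : Type*} {cov : α → α → Prop} {lab : α → α → L} {x y : α}
    {c : List α} {a b : L} (h : IsSatChain cov x y c) (hw : wordOf lab c = [a, b]) :
    ∃ w, c = [x, w, y] ∧ cov x w ∧ cov w y ∧ lab x w = a ∧ lab w y = b := by
  obtain ⟨hch, hhd, hlast⟩ := h
  rcases c with _ | ⟨p0, _ | ⟨p1, _ | ⟨p2, _ | ⟨p3, rest⟩⟩⟩⟩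
  · simp [wordOf] at hw
  · simp [wordOf] at hw
  · simp [wordOf] at hw
  · have h0 : p0 = x := by simpa using hhd
    have h2 : p2 = y := by simpa using hlast
    subst h0
    subst h2
    obtain ⟨ha, hb⟩ : lab p0 p1 = a ∧ lab p1 p2 = b := by simpa [wordOf] using hw
    have hch' : cov p0 p1 ∧ cov p1 p2 := by simpa [List.Chain', List.isChain_cons_cons] using hch
    exact ⟨p1, rfl, hch'.1, hch'.2, ha, hb⟩
  · simp [wordOf] at hw

lemma switch_finish {x y w : PPart A} {a b : ℕ × ℕ × Bool}
    (h1 : covPP x w) (h2 : covPP w y) (hl1 : labPP x w = b) (hl2 : labPP w y = a) :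
    ∃! c', (IsSatChain covPP x y c' ∧ wordOf labPP c' = [b, a]) := by
  refine ⟨[x, w, y], ⟨⟨?_, rfl, ?_⟩, ?_⟩, ?_⟩
  · simp [List.Chain', List.isChain_cons_cons, h1, h2]
  · simp
  · simp [wordOf, hl1, hl2]
  · rintro c' ⟨hs', hw'⟩
    obtain ⟨w', rfl, hc1, hc2, hm1, hm2⟩ := chain_two hs' hw'
    have hww : w' = w := cover_unique hc1 h1 (hm1.trans hl1.symm)
    rw [hww]

end Stmt4Aux

set_option maxHeartbeats 2000000 in
/-- The labeling `λ•` of the pointed partition poset `Πₙ•` satisfies the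
rank two switching property: in every rank-two interval whose unique increasing maximal
chain has word of labels `ab`, there is a unique maximal chain with word of labels `ba`. -/
theorem pointed_lambda_rank_two_switch (n : ℕ) :
    RankTwoSwitch (covPP (A := Finset.Icc 1 n)) (labPP (A := Finset.Icc 1 n)) ltLp := by
  intro x y c a b hc hinc hw
  obtain ⟨z, rfl, hcov1, hcov2, ha, hb⟩ := chain_two hc hw
  have hinc' : ltLp a b := by
    rw [hw] at hinc
    simpa [IncWord, List.Chain', List.isChain_cons_cons] using hinc
  obtain ⟨b1, hb1, b2, hb2, hlt12, p, hp, hzeq⟩ := hcov1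
  obtain ⟨d1, hd1, d2, hd2, hlt34, q, hq, hyeq⟩ := hcov2
  have hne12 : b1 ≠ b2 := fun h => absurd hlt12 (by simp [h])
  have hRx : ((b1.1 ∪ b2.1, p) : Finset ℕ × ℕ) ∉ x.1 := union_not_mem x hb1 hb2 hne12 p
  rw [labPP_eq hb1 hb2 hlt12 hp hzeq] at ha
  rw [labPP_eq hd1 hd2 hlt34 hq hyeq] at hb
  subst ha
  subst hb
  have hinc2 : minB b1.1 < minB d1.1 ∨ (minB b1.1 = minB d1.1 ∧
      (((if p = b1.2 then true else false) = false ∧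
        (if q = d1.2 then true else false) = true) ∨
       ((if p = b1.2 then true else false) = true ∧
        (if q = d1.2 then true else false) = true ∧
        minB b2.1 < minB d2.1))) := hinc'
  have hminR : minB (((b1.1 ∪ b2.1, p) : Finset ℕ × ℕ)).1 = minB b1.1 := by
    show minB (b1.1 ∪ b2.1) = minB b1.1
    rw [minB_union (blk_nonempty x hb1) (blk_nonempty x hb2)]
    exact min_eq_left hlt12.le
  by_cases hd2R : d2 = ((b1.1 ∪ b2.1, p) : Finset ℕ × ℕ)
  · exfalso
    subst hd2R
    have hlt' : minB d1.1 < minB b1.1 := by rw [← hminR]; exact hlt34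
    rcases hinc2 with h | ⟨h, -⟩ <;> omega
  by_cases hd1R : d1 = ((b1.1 ∪ b2.1, p) : Finset ℕ × ℕ)
  · subst hd1R
    rw [hzeq] at hd2
    rcases Finset.mem_insert.1 hd2 with h | hd2'
    · exact absurd h hd2R
    obtain ⟨hd2b2, hd2m⟩ := Finset.mem_erase.1 hd2'
    obtain ⟨hd2b1, hd2x⟩ := Finset.mem_erase.1 hd2m
    have hlt' : minB b1.1 < minB d2.1 := by rw [← hminR]; exact hlt34
    have hqp : q = ((b1.1 ∪ b2.1, p) : Finset ℕ × ℕ).2 := by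
      have h1eq : ¬ (minB b1.1 < minB (((b1.1 ∪ b2.1, p) : Finset ℕ × ℕ)).1) := by
        rw [hminR]; exact lt_irrefl _
      have hvtrue : (if q = ((b1.1 ∪ b2.1, p) : Finset ℕ × ℕ).2 then true else false)
          = true := by
        rcases hinc2 with h | ⟨-, ⟨-, h⟩ | ⟨-, h, -⟩⟩
        · exact absurd h h1eq
        · exact h
        · exact h
      by_contra hne
      rw [if_neg hne] at hvtrue
      exact Bool.false_ne_true hvtrue
    have hneb1d2 : b1 ≠ d2 := fun h => hd2b1 h.symm
    obtain ⟨w, hw1⟩ : ∃ w : PPart (Finset.Icc 1 n),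
        w.1 = insert (b1.1 ∪ d2.1, b1.2) ((x.1.erase b1).erase d2) :=
      ⟨pmerge x b1 d2 b1.2 hb1 hd2x hneb1d2 (Or.inl rfl), rfl⟩
    have hcovxw : covPP x w := ⟨b1, hb1, d2, hd2x, hlt', b1.2, Or.inl rfl, hw1⟩
    have hWx : ((b1.1 ∪ d2.1, b1.2) : Finset ℕ × ℕ) ∉ x.1 :=
      union_not_mem x hb1 hd2x hneb1d2 _
    have hWw : ((b1.1 ∪ d2.1, b1.2) : Finset ℕ × ℕ) ∈ w.1 := by
      rw [hw1]; exact Finset.mem_insert_self _ _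
    have hb2w : b2 ∈ w.1 := by
      rw [hw1]
      exact Finset.mem_insert_of_mem (Finset.mem_erase.2 ⟨fun h => hd2b2 h.symm,
        Finset.mem_erase.2 ⟨fun h => hne12 h.symm, hb2⟩⟩)
    have hminW : minB (((b1.1 ∪ d2.1, b1.2) : Finset ℕ × ℕ)).1 = minB b1.1 := by
      show minB (b1.1 ∪ d2.1) = minB b1.1
      rw [minB_union (blk_nonempty x hb1) (blk_nonempty x hd2x)]
      exact min_eq_left hlt'.le
    have hltW : minB (((b1.1 ∪ d2.1, b1.2) : Finset ℕ × ℕ)).1 < minB b2.1 := by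
      rw [hminW]; exact hlt12
    have hqor : q = ((b1.1 ∪ d2.1, b1.2) : Finset ℕ × ℕ).2 ∨ q = b2.2 := by
      rcases hp with h | h
      · exact Or.inl (hqp.trans h)
      · exact Or.inr (hqp.trans h)
    have hRs : ((b1.1 ∪ b2.1, p) : Finset ℕ × ℕ) ∉ (x.1.erase b1).erase b2 :=
      fun h => hRx (Finset.mem_of_mem_erase (Finset.mem_of_mem_erase h))
    have hWt : ((b1.1 ∪ d2.1, b1.2) : Finset ℕ × ℕ) ∉ (x.1.erase b1).erase d2 :=
      fun h => hWx (Finset.mem_of_mem_erase (Finset.mem_of_mem_erase h))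
    have hyy : y.1 = insert ((b1.1 ∪ d2.1) ∪ b2.1, q)
        ((w.1.erase ((b1.1 ∪ d2.1, b1.2) : Finset ℕ × ℕ)).erase b2) := by
      rw [hyeq, hzeq, Finset.erase_insert hRs, hw1, Finset.erase_insert hWt]
      dsimp only
      rw [Finset.union_right_comm]
      refine congrArg _ ?_
      ext e
      simp only [Finset.mem_erase]
      tauto
    have hcovwy : covPP w y :=
      ⟨(b1.1 ∪ d2.1, b1.2), hWw, b2, hb2w, hltW, q, hqor, hyy⟩
    have hlabxw : labPP x w = (minB (((b1.1 ∪ b2.1, p) : Finset ℕ × ℕ)).1, minB d2.1,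
        if q = ((b1.1 ∪ b2.1, p) : Finset ℕ × ℕ).2 then true else false) := by
      rw [labPP_eq hb1 hd2x hlt' (Or.inl rfl) hw1]
      rw [hminR]
      simp [hqp]
    have hlabwy : labPP w y = (minB b1.1, minB b2.1,
        if p = b1.2 then true else false) := by
      rw [labPP_eq hWw hb2w hltW hqor hyy]
      rw [hminW]
      have hqp' : q = p := hqp
      simp [hqp']
    exact switch_finish hcovxw hcovwy hlabxw hlabwy
  · rw [hzeq] at hd1 hd2
    rcases Finset.mem_insert.1 hd1 with h | hd1'
    · exact absurd h hd1R
    rcases Finset.mem_insert.1 hd2 with h | hd2'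
    · exact absurd h hd2R
    obtain ⟨hd1b2, hd1m⟩ := Finset.mem_erase.1 hd1'
    obtain ⟨hd1b1, hd1x⟩ := Finset.mem_erase.1 hd1m
    obtain ⟨hd2b2, hd2m⟩ := Finset.mem_erase.1 hd2'
    obtain ⟨hd2b1, hd2x⟩ := Finset.mem_erase.1 hd2m
    have hne34 : d1 ≠ d2 := fun h => absurd hlt34 (by simp [h])
    obtain ⟨w, hw1⟩ : ∃ w : PPart (Finset.Icc 1 n),
        w.1 = insert (d1.1 ∪ d2.1, q) ((x.1.erase d1).erase d2) :=
      ⟨pmerge x d1 d2 q hd1x hd2x hne34 hq, rfl⟩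
    have hcovxw : covPP x w := ⟨d1, hd1x, d2, hd2x, hlt34, q, hq, hw1⟩
    have hlabxw : labPP x w = (minB d1.1, minB d2.1,
        if q = d1.2 then true else false) :=
      labPP_eq hd1x hd2x hlt34 hq hw1
    have hDx : ((d1.1 ∪ d2.1, q) : Finset ℕ × ℕ) ∉ x.1 :=
      union_not_mem x hd1x hd2x hne34 q
    have hb1w : b1 ∈ w.1 := by
      rw [hw1]
      exact Finset.mem_insert_of_mem (Finset.mem_erase.2 ⟨fun h => hd2b1 h.symm,
        Finset.mem_erase.2 ⟨fun h => hd1b1 h.symm, hb1⟩⟩)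
    have hb2w : b2 ∈ w.1 := by
      rw [hw1]
      exact Finset.mem_insert_of_mem (Finset.mem_erase.2 ⟨fun h => hd2b2 h.symm,
        Finset.mem_erase.2 ⟨fun h => hd1b2 h.symm, hb2⟩⟩)
    have hyy : y.1 = insert (b1.1 ∪ b2.1, p) ((w.1.erase b1).erase b2) := by
      rw [hyeq, hzeq, hw1]
      rw [Finset.erase_insert_of_ne (fun h => hRx (by rw [h]; exact hd1x))]
      rw [Finset.erase_insert_of_ne (fun h => hRx (by rw [h]; exact hd2x))]
      rw [Finset.erase_insert_of_ne (fun h => hDx (by rw [h]; exact hb1))]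
      rw [Finset.erase_insert_of_ne (fun h => hDx (by rw [h]; exact hb2))]
      rw [Finset.insert_comm]
      refine congrArg _ (congrArg _ ?_)
      ext e
      simp only [Finset.mem_erase]
      tauto
    have hcovwy : covPP w y := ⟨b1, hb1w, b2, hb2w, hlt12, p, hp, hyy⟩
    have hlabwy : labPP w y = (minB b1.1, minB b2.1,
        if p = b1.2 then true else false) :=
      labPP_eq hb1w hb2w hlt12 hp hyy
    exact switch_finish hcovxw hcovwy hlabxw hlabwy
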